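/- Let 1 ≤ d ≤ m, let a_1, …, a_r ∈ S_d(m) be distinct exponent vectors (r ≥ 2), and for each 1 ≤ i ≤ r−1 choose an index j_i ∈ supp(a_i) ∖ supp(a_r) (such an index exists since a_i ≠ a_r and |a_i| = |a_r| = d); set J = {j_1, …, j_{r−1}}. Then |∇_X({a_r}) ∖ ∇_X({a_1,…,a_{r−1}})| ≥ ∏_{i ∈ supp(a_r)} (n_i − 1) · ∏_{i ∈ {1,…,m} ∖ (supp(a_r) ∪ J)} n_i. -/
import Mathlib


/-- Square-free exponent vectors of total degree `d` in `m` variables. -/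
def Sd (m d : ℕ) : Set (Fin m → ℕ) := {a | (∀ i, a i ≤ 1) ∧ ∑ i, a i = d}

/-- Square-free exponent vectors of total degree at most `d` in `m` variables. -/
def Sle (m d : ℕ) : Set (Fin m → ℕ) := {a | (∀ i, a i ≤ 1) ∧ ∑ i, a i ≤ d}

/-- Evaluation code over the Cartesian set `X = A 0 × ⋯ × A (m-1)`, spanned by the
evaluations of the monomials `x^a` for `a ∈ S`. -/
noncomputable def evalCodeX {F : Type*} [Field F] {m : ℕ} (A : Fin m → Finset F)
    (S : Set (Fin m → ℕ)) :
    Submodule F ({P : Fin m → F // ∀ i, P i ∈ A i} → F) :=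
  Submodule.span F ((fun (a : Fin m → ℕ) (P : {P : Fin m → F // ∀ i, P i ∈ A i}) =>
    ∏ i, P.1 i ^ a i) '' S)

open Classical in
/-- Support of a linear code. -/
noncomputable def codeSupp {F ι : Type*} [Field F] [Fintype ι]
    (C : Submodule F (ι → F)) : Finset ι :=
  Finset.univ.filter (fun i => ∃ c ∈ C, c i ≠ 0)

/-- The `r`-th generalized Hamming weight of a linear code: the minimum cardinality of the
support of an `r`-dimensional subcode. -/
noncomputable def GHW {F ι : Type*} [Field F] [Fintype ι]
    (C : Submodule F (ι → F)) (r : ℕ) : ℕ :=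
  sInf {k | ∃ C' : Submodule F (ι → F),
    C' ≤ C ∧ Module.finrank F C' = r ∧ (codeSupp C').card = k}

/-- The footprint box `B_X = {0,…,n_1−1} × ⋯ × {0,…,n_m−1}`. -/
noncomputable def BX {F : Type*} {m : ℕ} (A : Fin m → Finset F) : Finset (Fin m → ℕ) :=
  Fintype.piFinset (fun i => Finset.range (A i).card)

open Classical in
/-- The shadow `∇_X(N)`: elements of `B_X` divisible by some element of `N`. -/
noncomputable def nablaX {F : Type*} {m : ℕ} (A : Fin m → Finset F)
    (N : Set (Fin m → ℕ)) : Finset (Fin m → ℕ) :=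
  (BX A).filter (fun b => ∃ a ∈ N, ∀ i, a i ≤ b i)

open Classical in
/-- The footprint `Δ_X(N) = B_X ∖ ∇_X(N)`. -/
noncomputable def deltaX {F : Type*} {m : ℕ} (A : Fin m → Finset F)
    (N : Set (Fin m → ℕ)) : Finset (Fin m → ℕ) :=
  (BX A).filter (fun b => ¬ ∃ a ∈ N, ∀ i, a i ≤ b i)

/-- Let `a_1, …, a_r, a_{r+1} ∈ S_d(m)` be distinct (here indexed by
`Fin (r+1)` with `r ≥ 1`, so there are at least two of them, and `a (Fin.last r)` plays
the role of the paper's `a_r`). For each `i < r` choose `j_i ∈ supp(a_i) ∖ supp(a_r)` and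
set `J = {j_1,…,j_{r−1}}`. Then
`|∇_X({a_r}) ∖ ∇_X({a_1,…,a_{r−1}})| ≥ ∏_{i ∈ supp(a_r)}(n_i−1) · ∏_{i ∉ supp(a_r) ∪ J} n_i`. -/
theorem shadow_diff_card_lower_bound
    {F : Type*} [Field F] [Fintype F] [DecidableEq F] {m d r : ℕ}
    (A : Fin m → Finset F)
    (hcard : ∀ i, 2 ≤ (A i).card)
    (hmono : ∀ i j : Fin m, i ≤ j → (A i).card ≤ (A j).card)
    (hd1 : 1 ≤ d) (hdm : d ≤ m) (hr : 1 ≤ r)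
    (a : Fin (r + 1) → (Fin m → ℕ)) (hainj : Function.Injective a)
    (ha : ∀ i, a i ∈ Sd m d)
    (j : Fin r → Fin m)
    (hj : ∀ i : Fin r, a i.castSucc (j i) ≠ 0 ∧ a (Fin.last r) (j i) = 0) :
    (∏ i ∈ Finset.univ.filter (fun i : Fin m => a (Fin.last r) i ≠ 0), ((A i).card - 1)) *
        (∏ i ∈ Finset.univ \
            (Finset.univ.filter (fun i : Fin m => a (Fin.last r) i ≠ 0) ∪
              Finset.image j Finset.univ), (A i).card) ≤
      ((nablaX A {a (Fin.last r)}) \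
        (nablaX A (Set.range (fun i : Fin r => a i.castSucc)))).card := by
  classical
  set S : Finset (Fin m) := Finset.univ.filter (fun i : Fin m => a (Fin.last r) i ≠ 0) with hS
  set J : Finset (Fin m) := Finset.image j Finset.univ with hJ
  set choice : Fin m → Finset ℕ := fun i =>
    if a (Fin.last r) i ≠ 0 then Finset.Ico 1 (A i).card
    else if i ∈ J then {0} else Finset.range (A i).card with hchoice
  have hsub : Fintype.piFinset choice ⊆
      (nablaX A {a (Fin.last r)}) \
        (nablaX A (Set.range (fun i : Fin r => a i.castSucc))) := by
    intro b hb
    rw [Fintype.mem_piFinset] at hb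
    have hbx : b ∈ BX A := by
      rw [BX, Fintype.mem_piFinset]
      intro i
      have h := hb i
      simp only [hchoice] at h
      split_ifs at h with h1 h2
      · exact Finset.mem_range.2 (Finset.mem_Ico.1 h).2
      · simp only [Finset.mem_singleton] at h
        rw [h]
        exact Finset.mem_range.2 (lt_of_lt_of_le two_pos (hcard i))
      · exact h
    rw [Finset.mem_sdiff]
    constructor
    · rw [nablaX, Finset.mem_filter]
      refine ⟨hbx, a (Fin.last r), rfl, fun i => ?_⟩
      by_cases h : a (Fin.last r) i ≠ 0
      · have hbi := hb i
        simp only [hchoice, if_pos h] at hbi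
        have h1 : 1 ≤ b i := (Finset.mem_Ico.1 hbi).1
        have h2 := (ha (Fin.last r)).1 i
        omega
      · push_neg at h
        omega
    · rw [nablaX, Finset.mem_filter]
      rintro ⟨-, a', ⟨i, rfl⟩, hle⟩
      have hji := hj i
      have hjJ : j i ∈ J := Finset.mem_image.2 ⟨i, Finset.mem_univ i, rfl⟩
      have hbj := hb (j i)
      rw [hchoice] at hbj
      simp only [hji.2, ne_eq, not_true_eq_false, if_false, not_false_eq_true, if_true,
        hjJ, if_pos, Finset.mem_singleton] at hbj
      have hb0 : b (j i) = 0 := by simpa using hbj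
      have hle2 := hle (j i)
      rw [hb0, Nat.le_zero] at hle2
      exact hji.1 hle2
  have hdisj : Disjoint S J := by
    rw [Finset.disjoint_left]
    intro x hx hxJ
    obtain ⟨k, -, rfl⟩ := Finset.mem_image.1 hxJ
    exact (Finset.mem_filter.1 hx).2 (hj k).2
  have h1 : ∀ i ∈ S, (choice i).card = (A i).card - 1 := by
    intro i hi
    have h : a (Fin.last r) i ≠ 0 := (Finset.mem_filter.1 hi).2
    simp [hchoice, h]
  have h2 : ∀ i ∈ J, (choice i).card = 1 := by
    intro i hi
    obtain ⟨k, -, rfl⟩ := Finset.mem_image.1 hi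
    simp [hchoice, (hj k).2, hi]
  have h3 : ∀ i ∈ Finset.univ \ (S ∪ J), (choice i).card = (A i).card := by
    intro i hi
    rw [Finset.mem_sdiff, Finset.mem_union] at hi
    have hiS : a (Fin.last r) i = 0 := by
      by_contra h
      exact hi.2 (Or.inl (Finset.mem_filter.2 ⟨Finset.mem_univ i, h⟩))
    have hiJ : i ∉ J := fun h => hi.2 (Or.inr h)
    simp [hchoice, hiS, hiJ]
  have key : (∏ i, (choice i).card)
      = (∏ i ∈ S, ((A i).card - 1)) * (∏ i ∈ Finset.univ \ (S ∪ J), (A i).card) := by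
    rw [← Finset.prod_sdiff (Finset.subset_univ (S ∪ J)), Finset.prod_union hdisj,
      Finset.prod_congr rfl h1, Finset.prod_congr rfl h2, Finset.prod_congr rfl h3]
    simp [mul_comm]
  calc (∏ i ∈ S, ((A i).card - 1)) * (∏ i ∈ Finset.univ \ (S ∪ J), (A i).card)
      = (Fintype.piFinset choice).card := by rw [Fintype.card_piFinset, key]
    _ ≤ _ := Finset.card_le_card hsub
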